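/- arXiv:1908.09690 — 4 statements merged into one kernel-verified Lean document; each statement's English description precedes it below -/
import Mathlib

section
/- Let ε, k > 0 and δ ≥ 0, and set ε' = ε/√(1+δ). Under the admissibility assumptions on u, v, w, the map t ↦ Ẽ(u + t·v; w) from ℝ to ℝ is differentiable at t = 0, and its derivative equals (1/k)∫_Ω (u−w)v dx + ∫_Ω ∇u·∇v dx + (1/ε'²)∫_Ω f(u) v dx, i.e. the Gateaux derivative of the penalized discrete energy at u in direction v coincides with the residual of the fully implicit scheme with scaled interaction length ε' = ε/√(δ+1) tested against v. -/
open MeasureTheory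

/-- The double-well potential `F(s) = (1/4)(s² − 1)²`. -/
noncomputable def dwF (s : ℝ) : ℝ := (1 / 4) * (s ^ 2 - 1) ^ 2

/-- Its derivative `f(s) = s³ − s`. -/
noncomputable def dwf (s : ℝ) : ℝ := s ^ 3 - s

/-- The Ginzburg–Landau energy `J_ε(z) = ∫_Ω ((1/2)|∇z|² + (1/ε²)F(z))`. -/
noncomputable def GLJ {d : ℕ} (Ω : Set (EuclideanSpace ℝ (Fin d))) (ε : ℝ)
    (z : EuclideanSpace ℝ (Fin d) → ℝ) : ℝ :=
  ∫ x in Ω, ((1 / 2) * ‖gradient z x‖ ^ 2 + (1 / ε ^ 2) * dwF (z x))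

/-- The discrete energy `E(z; w) = J_ε(z) + (1/(2k)) ∫_Ω (z − w)²`. -/
noncomputable def discE {d : ℕ} (Ω : Set (EuclideanSpace ℝ (Fin d))) (ε k : ℝ)
    (z w : EuclideanSpace ℝ (Fin d) → ℝ) : ℝ :=
  GLJ Ω ε z + (1 / (2 * k)) * ∫ x in Ω, (z x - w x) ^ 2

/-- The penalized discrete energy
`Ẽ(z; w) = E(z; w) + (δ/ε²)(∫_Ω F(z) − ∫_Ω F(w))`. -/
noncomputable def penE {d : ℕ} (Ω : Set (EuclideanSpace ℝ (Fin d))) (ε k δ : ℝ)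
    (z w : EuclideanSpace ℝ (Fin d) → ℝ) : ℝ :=
  discE Ω ε k z w + (δ / ε ^ 2) * ((∫ x in Ω, dwF (z x)) - ∫ x in Ω, dwF (w x))


private lemma pen_grad_add_smul {d : ℕ} (u v : EuclideanSpace ℝ (Fin d) → ℝ)
    (hu : Differentiable ℝ u) (hv : Differentiable ℝ v) (t : ℝ)
    (x : EuclideanSpace ℝ (Fin d)) :
    gradient (fun y => u y + t * v y) x = gradient u x + t • gradient v x := by
  have h1 : HasFDerivAt (fun y => u y + t * v y) (fderiv ℝ u x + t • fderiv ℝ v x) x :=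
    ((hu x).hasFDerivAt).add (((hv x).hasFDerivAt).const_mul t)
  rw [gradient, h1.fderiv, map_add, gradient, gradient]
  congr 1
  simp

private lemma pen_norm_expand {d : ℕ} (t : ℝ) (p q : EuclideanSpace ℝ (Fin d)) :
    ‖p + t • q‖ ^ 2 = ‖p‖ ^ 2 + 2 * t * (inner ℝ p q : ℝ) + t ^ 2 * ‖q‖ ^ 2 := by
  rw [norm_add_sq_real, real_inner_smul_right, norm_smul, mul_pow]
  simp [Real.norm_eq_abs, sq_abs]
  ring

private lemma pen_integral_poly4 {X : Type*} [MeasurableSpace X] (μ : Measure X)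
    {h a0 a1 a2 a3 a4 : X → ℝ} (t : ℝ)
    (heq : ∀ x, h x = a0 x + t * a1 x + t ^ 2 * a2 x + t ^ 3 * a3 x + t ^ 4 * a4 x)
    (i0 : Integrable a0 μ) (i1 : Integrable a1 μ) (i2 : Integrable a2 μ)
    (i3 : Integrable a3 μ) (i4 : Integrable a4 μ) :
    ∫ x, h x ∂μ = (∫ x, a0 x ∂μ) + t * (∫ x, a1 x ∂μ) + t ^ 2 * (∫ x, a2 x ∂μ)
      + t ^ 3 * (∫ x, a3 x ∂μ) + t ^ 4 * (∫ x, a4 x ∂μ) := by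
  have j1 : Integrable (fun x => t * a1 x) μ := i1.const_mul t
  have j2 : Integrable (fun x => t ^ 2 * a2 x) μ := i2.const_mul _
  have j3 : Integrable (fun x => t ^ 3 * a3 x) μ := i3.const_mul _
  have j4 : Integrable (fun x => t ^ 4 * a4 x) μ := i4.const_mul _
  have j01 : Integrable (fun x => a0 x + t * a1 x) μ := i0.add j1
  have j012 : Integrable (fun x => a0 x + t * a1 x + t ^ 2 * a2 x) μ := j01.add j2
  have j0123 : Integrable (fun x => a0 x + t * a1 x + t ^ 2 * a2 x + t ^ 3 * a3 x) μ :=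
    j012.add j3
  calc ∫ x, h x ∂μ
      = ∫ x, (a0 x + t * a1 x + t ^ 2 * a2 x + t ^ 3 * a3 x) + t ^ 4 * a4 x ∂μ := by
        refine integral_congr_ae (Filter.Eventually.of_forall fun x => ?_)
        rw [heq x]
    _ = _ := by
        rw [integral_add j0123 j4, integral_add j012 j3, integral_add j01 j2,
          integral_add i0 j1, integral_const_mul, integral_const_mul, integral_const_mul,
          integral_const_mul]

private lemma pen_integral_poly2 {X : Type*} [MeasurableSpace X] (μ : Measure X)
    {h a0 a1 a2 : X → ℝ} (t : ℝ)
    (heq : ∀ x, h x = a0 x + t * a1 x + t ^ 2 * a2 x)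
    (i0 : Integrable a0 μ) (i1 : Integrable a1 μ) (i2 : Integrable a2 μ) :
    ∫ x, h x ∂μ = (∫ x, a0 x ∂μ) + t * (∫ x, a1 x ∂μ) + t ^ 2 * (∫ x, a2 x ∂μ) := by
  have j1 : Integrable (fun x => t * a1 x) μ := i1.const_mul t
  have j2 : Integrable (fun x => t ^ 2 * a2 x) μ := i2.const_mul _
  have j01 : Integrable (fun x => a0 x + t * a1 x) μ := i0.add j1
  calc ∫ x, h x ∂μ
      = ∫ x, (a0 x + t * a1 x) + t ^ 2 * a2 x ∂μ := by
        refine integral_congr_ae (Filter.Eventually.of_forall fun x => ?_)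
        rw [heq x]
    _ = _ := by
        rw [integral_add j01 j2, integral_add i0 j1, integral_const_mul, integral_const_mul]

private lemma pen_intOn {d : ℕ} {Ω : Set (EuclideanSpace ℝ (Fin d))} (hΩ : MeasurableSet Ω)
    (hΩfin : volume Ω < ⊤) {f : EuclideanSpace ℝ (Fin d) → ℝ}
    (hf : Measurable f) {C : ℝ} (hb : ∀ x ∈ Ω, |f x| ≤ C) :
    IntegrableOn f Ω volume :=
  Measure.integrableOn_of_bounded hΩfin.ne hf.aestronglyMeasurable
    (((ae_restrict_mem hΩ).mono fun x hx => by
      rw [Real.norm_eq_abs]; exact hb x hx))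

private lemma pen_bnd_mul {a b A B : ℝ} (ha : |a| ≤ A) (hb : |b| ≤ B) : |a * b| ≤ A * B := by
  rw [abs_mul]
  exact mul_le_mul ha hb (abs_nonneg _) (le_trans (abs_nonneg _) ha)

private lemma pen_bnd_pow {a M : ℝ} (h : |a| ≤ M) (n : ℕ) : |a ^ n| ≤ M ^ n := by
  rw [abs_pow]; exact pow_le_pow_left₀ (abs_nonneg _) h n

private lemma pen_bnd_sub {a b A B : ℝ} (ha : |a| ≤ A) (hb : |b| ≤ B) : |a - b| ≤ A + B :=
  calc |a - b| = |a + -b| := by rw [sub_eq_add_neg]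
    _ ≤ |a| + |-b| := abs_add_le _ _
    _ = |a| + |b| := by rw [abs_neg]
    _ ≤ A + B := add_le_add ha hb

theorem gateaux_derivative_of_penalized_energy
    (d : ℕ) (hd : 1 ≤ d)
    (Ω : Set (EuclideanSpace ℝ (Fin d))) (hΩ : MeasurableSet Ω)
    (hΩfin : volume Ω < ⊤)
    (ε k δ : ℝ) (hε : 0 < ε) (hk : 0 < k) (hδ : 0 ≤ δ)
    (u v w : EuclideanSpace ℝ (Fin d) → ℝ)
    (hu : Differentiable ℝ u) (hv : Differentiable ℝ v)
    (hum : Measurable u) (hvm : Measurable v) (hwm : Measurable w)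
    (hgum : Measurable fun x => gradient u x)
    (hgvm : Measurable fun x => gradient v x)
    (hub : ∃ C, ∀ x ∈ Ω, |u x| ≤ C) (hvb : ∃ C, ∀ x ∈ Ω, |v x| ≤ C)
    (hwb : ∃ C, ∀ x ∈ Ω, |w x| ≤ C)
    (hgub : ∃ C, ∀ x ∈ Ω, ‖gradient u x‖ ≤ C)
    (hgvb : ∃ C, ∀ x ∈ Ω, ‖gradient v x‖ ≤ C) :
    HasDerivAt (fun t : ℝ => penE Ω ε k δ (fun x => u x + t * v x) w)
      ((1 / k) * (∫ x in Ω, (u x - w x) * v x)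
        + (∫ x in Ω, (inner ℝ (gradient u x) (gradient v x) : ℝ))
        + (1 / (ε / Real.sqrt (1 + δ)) ^ 2) * ∫ x in Ω, dwf (u x) * v x)
      0 := by
  obtain ⟨Cu, hCu⟩ := hub
  obtain ⟨Cv, hCv⟩ := hvb
  obtain ⟨Cw, hCw⟩ := hwb
  obtain ⟨Cgu, hCgu⟩ := hgub
  obtain ⟨Cgv, hCgv⟩ := hgvb
  have hMu : ∀ x ∈ Ω, |u x| ≤ |Cu| := fun x hx => (hCu x hx).trans (le_abs_self _)
  have hMv : ∀ x ∈ Ω, |v x| ≤ |Cv| := fun x hx => (hCv x hx).trans (le_abs_self _)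
  have hMw : ∀ x ∈ Ω, |w x| ≤ |Cw| := fun x hx => (hCw x hx).trans (le_abs_self _)
  have hMgu : ∀ x ∈ Ω, ‖gradient u x‖ ≤ |Cgu| := fun x hx => (hCgu x hx).trans (le_abs_self _)
  have hMgv : ∀ x ∈ Ω, ‖gradient v x‖ ≤ |Cgv| := fun x hx => (hCgv x hx).trans (le_abs_self _)
  -- integrability of the atomic integrands
  have igg : IntegrableOn (fun x => (inner ℝ (gradient u x) (gradient v x) : ℝ)) Ω volume := by
    refine pen_intOn hΩ hΩfin (hgum.inner hgvm) (C := |Cgu| * |Cgv|) fun x hx => ?_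
    exact (abs_real_inner_le_norm _ _).trans
      (mul_le_mul (hMgu x hx) (hMgv x hx) (norm_nonneg _) (abs_nonneg _))
  have igu2 : IntegrableOn (fun x => ‖gradient u x‖ ^ 2) Ω volume := by
    refine pen_intOn hΩ hΩfin (hgum.norm.pow_const 2) (C := |Cgu| ^ 2) fun x hx => ?_
    rw [abs_of_nonneg (by positivity)]
    exact pow_le_pow_left₀ (norm_nonneg _) (hMgu x hx) 2
  have igv2 : IntegrableOn (fun x => ‖gradient v x‖ ^ 2) Ω volume := by
    refine pen_intOn hΩ hΩfin (hgvm.norm.pow_const 2) (C := |Cgv| ^ 2) fun x hx => ?_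
    rw [abs_of_nonneg (by positivity)]
    exact pow_le_pow_left₀ (norm_nonneg _) (hMgv x hx) 2
  have ip0 : IntegrableOn (fun x => dwF (u x)) Ω volume := by
    refine pen_intOn hΩ hΩfin ?_ (C := 1 / 4 * (|Cu| ^ 2 + 1) ^ 2) ?_
    · unfold dwF
      exact (((hum.pow_const 2).sub measurable_const).pow_const 2).const_mul _
    · intro x hx
      simp only [dwF]
      exact pen_bnd_mul (by rw [abs_of_nonneg] <;> norm_num)
        (pen_bnd_pow (pen_bnd_sub (pen_bnd_pow (hMu x hx) 2) (by norm_num : |(1 : ℝ)| ≤ 1)) 2)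
  have ip1 : IntegrableOn (fun x => dwf (u x) * v x) Ω volume := by
    refine pen_intOn hΩ hΩfin ?_ (C := (|Cu| ^ 3 + |Cu|) * |Cv|) ?_
    · unfold dwf
      exact ((hum.pow_const 3).sub hum).mul hvm
    · intro x hx
      simp only [dwf]
      exact pen_bnd_mul (pen_bnd_sub (pen_bnd_pow (hMu x hx) 3) (hMu x hx)) (hMv x hx)
  have ip2 : IntegrableOn (fun x => 1 / 2 * ((3 * u x ^ 2 - 1) * v x ^ 2)) Ω volume := by
    refine pen_intOn hΩ hΩfin ?_ (C := 1 / 2 * ((3 * |Cu| ^ 2 + 1) * |Cv| ^ 2)) ?_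
    · exact ((((hum.pow_const 2).const_mul 3).sub measurable_const).mul
        (hvm.pow_const 2)).const_mul _
    · intro x hx
      refine pen_bnd_mul (by rw [abs_of_nonneg] <;> norm_num) (pen_bnd_mul (pen_bnd_sub ?_ (by norm_num : |(1 : ℝ)| ≤ 1))
        (pen_bnd_pow (hMv x hx) 2))
      exact pen_bnd_mul (by norm_num : |(3 : ℝ)| ≤ 3) (pen_bnd_pow (hMu x hx) 2)
  have ip3 : IntegrableOn (fun x => u x * v x ^ 3) Ω volume := by
    refine pen_intOn hΩ hΩfin (hum.mul (hvm.pow_const 3)) (C := |Cu| * |Cv| ^ 3) fun x hx => ?_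
    exact pen_bnd_mul (hMu x hx) (pen_bnd_pow (hMv x hx) 3)
  have ip4 : IntegrableOn (fun x => 1 / 4 * v x ^ 4) Ω volume := by
    refine pen_intOn hΩ hΩfin ((hvm.pow_const 4).const_mul _)
      (C := 1 / 4 * |Cv| ^ 4) fun x hx => ?_
    exact pen_bnd_mul (by rw [abs_of_nonneg] <;> norm_num) (pen_bnd_pow (hMv x hx) 4)
  have iq0 : IntegrableOn (fun x => (u x - w x) ^ 2) Ω volume := by
    refine pen_intOn hΩ hΩfin ((hum.sub hwm).pow_const 2)
      (C := (|Cu| + |Cw|) ^ 2) fun x hx => ?_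
    exact pen_bnd_pow (pen_bnd_sub (hMu x hx) (hMw x hx)) 2
  have iqv : IntegrableOn (fun x => (u x - w x) * v x) Ω volume := by
    refine pen_intOn hΩ hΩfin ((hum.sub hwm).mul hvm)
      (C := (|Cu| + |Cw|) * |Cv|) fun x hx => ?_
    exact pen_bnd_mul (pen_bnd_sub (hMu x hx) (hMw x hx)) (hMv x hx)
  have iq2 : IntegrableOn (fun x => v x ^ 2) Ω volume := by
    refine pen_intOn hΩ hΩfin (hvm.pow_const 2) (C := |Cv| ^ 2) fun x hx => ?_
    exact pen_bnd_pow (hMv x hx) 2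
  -- derived integrabilities
  have ib0 : IntegrableOn (fun x => 1 / 2 * ‖gradient u x‖ ^ 2 + 1 / ε ^ 2 * dwF (u x))
      Ω volume := (igu2.const_mul _).add (ip0.const_mul _)
  have ib1 : IntegrableOn (fun x =>
      (inner ℝ (gradient u x) (gradient v x) : ℝ) + 1 / ε ^ 2 * (dwf (u x) * v x)) Ω volume :=
    igg.add (ip1.const_mul _)
  have ib2a : IntegrableOn (fun x => 1 / 2 * ‖gradient v x‖ ^ 2) Ω volume := igv2.const_mul _
  have ib2b : IntegrableOn (fun x => 1 / ε ^ 2 * (1 / 2 * ((3 * u x ^ 2 - 1) * v x ^ 2)))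
      Ω volume := ip2.const_mul _
  have ib2 : IntegrableOn (fun x => 1 / 2 * ‖gradient v x‖ ^ 2
      + 1 / ε ^ 2 * (1 / 2 * ((3 * u x ^ 2 - 1) * v x ^ 2))) Ω volume := ib2a.add ib2b
  have ib3 : IntegrableOn (fun x => 1 / ε ^ 2 * (u x * v x ^ 3)) Ω volume := ip3.const_mul _
  have ib4 : IntegrableOn (fun x => 1 / ε ^ 2 * (1 / 4 * v x ^ 4)) Ω volume := ip4.const_mul _
  have ip1e : IntegrableOn (fun x => 1 / ε ^ 2 * (dwf (u x) * v x)) Ω volume := ip1.const_mul _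
  have iq1 : IntegrableOn (fun x => 2 * ((u x - w x) * v x)) Ω volume := iqv.const_mul _
  -- key polynomial expansion
  have key : ∀ t : ℝ, penE Ω ε k δ (fun x => u x + t * v x) w
      = penE Ω ε k δ u w + t * ((∫ x in Ω, (inner ℝ (gradient u x) (gradient v x) : ℝ)) + (1 + δ) / ε ^ 2 * (∫ x in Ω, dwf (u x) * v x) + 1 / k * (∫ x in Ω, (u x - w x) * v x)) + t ^ 2 * ((∫ x in Ω, 1 / 2 * ‖gradient v x‖ ^ 2) + (1 + δ) / ε ^ 2 * (∫ x in Ω, 1 / 2 * ((3 * u x ^ 2 - 1) * v x ^ 2)) + 1 / (2 * k) * (∫ x in Ω, v x ^ 2)) + t ^ 3 * ((1 + δ) / ε ^ 2 * (∫ x in Ω, u x * v x ^ 3)) + t ^ 4 * ((1 + δ) / ε ^ 2 * (∫ x in Ω, 1 / 4 * v x ^ 4)) := by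
    intro t
    have heq1 : ∀ x, 1 / 2 * ‖gradient (fun x => u x + t * v x) x‖ ^ 2
        + 1 / ε ^ 2 * dwF (u x + t * v x)
        = (1 / 2 * ‖gradient u x‖ ^ 2 + 1 / ε ^ 2 * dwF (u x))
          + t * ((inner ℝ (gradient u x) (gradient v x) : ℝ) + 1 / ε ^ 2 * (dwf (u x) * v x))
          + t ^ 2 * (1 / 2 * ‖gradient v x‖ ^ 2
            + 1 / ε ^ 2 * (1 / 2 * ((3 * u x ^ 2 - 1) * v x ^ 2)))
          + t ^ 3 * (1 / ε ^ 2 * (u x * v x ^ 3))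
          + t ^ 4 * (1 / ε ^ 2 * (1 / 4 * v x ^ 4)) := by
      intro x
      rw [pen_grad_add_smul u v hu hv t x, pen_norm_expand]
      simp only [dwF, dwf]
      ring
    have heq2 : ∀ x : EuclideanSpace ℝ (Fin d), (u x + t * v x - w x) ^ 2
        = (u x - w x) ^ 2 + t * (2 * ((u x - w x) * v x)) + t ^ 2 * v x ^ 2 := by
      intro x; ring
    have heq3 : ∀ x : EuclideanSpace ℝ (Fin d), dwF (u x + t * v x)
        = dwF (u x) + t * (dwf (u x) * v x)
          + t ^ 2 * (1 / 2 * ((3 * u x ^ 2 - 1) * v x ^ 2))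
          + t ^ 3 * (u x * v x ^ 3) + t ^ 4 * (1 / 4 * v x ^ 4) := by
      intro x; simp only [dwF, dwf]; ring
    have e1 : GLJ Ω ε (fun x => u x + t * v x)
        = GLJ Ω ε u
          + t * ((∫ x in Ω, (inner ℝ (gradient u x) (gradient v x) : ℝ)) + 1 / ε ^ 2 * (∫ x in Ω, dwf (u x) * v x))
          + t ^ 2 * ((∫ x in Ω, 1 / 2 * ‖gradient v x‖ ^ 2) + 1 / ε ^ 2 * (∫ x in Ω, 1 / 2 * ((3 * u x ^ 2 - 1) * v x ^ 2)))
          + t ^ 3 * (1 / ε ^ 2 * (∫ x in Ω, u x * v x ^ 3))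
          + t ^ 4 * (1 / ε ^ 2 * (∫ x in Ω, 1 / 4 * v x ^ 4)) := by
      calc GLJ Ω ε (fun x => u x + t * v x)
          = (∫ x in Ω, (1 / 2 * ‖gradient u x‖ ^ 2 + 1 / ε ^ 2 * dwF (u x)))
            + t * (∫ x in Ω, ((inner ℝ (gradient u x) (gradient v x) : ℝ)
              + 1 / ε ^ 2 * (dwf (u x) * v x)))
            + t ^ 2 * (∫ x in Ω, (1 / 2 * ‖gradient v x‖ ^ 2
              + 1 / ε ^ 2 * (1 / 2 * ((3 * u x ^ 2 - 1) * v x ^ 2))))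
            + t ^ 3 * (∫ x in Ω, 1 / ε ^ 2 * (u x * v x ^ 3))
            + t ^ 4 * (∫ x in Ω, 1 / ε ^ 2 * (1 / 4 * v x ^ 4)) :=
          pen_integral_poly4 _ t heq1 ib0 ib1 ib2 ib3 ib4
        _ = _ := by
          rw [integral_add igg ip1e, integral_add ib2a ib2b,
            integral_const_mul (1 / ε ^ 2 : ℝ), integral_const_mul (1 / ε ^ 2 : ℝ),
            integral_const_mul (1 / ε ^ 2 : ℝ), integral_const_mul (1 / ε ^ 2 : ℝ)]
          rfl
    have e2 : (∫ x in Ω, (u x + t * v x - w x) ^ 2)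
        = (∫ x in Ω, (u x - w x) ^ 2) + t * (2 * (∫ x in Ω, (u x - w x) * v x)) + t ^ 2 * (∫ x in Ω, v x ^ 2) := by
      calc (∫ x in Ω, (u x + t * v x - w x) ^ 2)
          = (∫ x in Ω, (u x - w x) ^ 2) + t * (∫ x in Ω, 2 * ((u x - w x) * v x))
            + t ^ 2 * (∫ x in Ω, v x ^ 2) := pen_integral_poly2 _ t heq2 iq0 iq1 iq2
        _ = _ := by rw [integral_const_mul]
    have e3 : (∫ x in Ω, dwF (u x + t * v x))
        = (∫ x in Ω, dwF (u x)) + t * (∫ x in Ω, dwf (u x) * v x) + t ^ 2 * (∫ x in Ω, 1 / 2 * ((3 * u x ^ 2 - 1) * v x ^ 2)) + t ^ 3 * (∫ x in Ω, u x * v x ^ 3) + t ^ 4 * (∫ x in Ω, 1 / 4 * v x ^ 4) :=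
      pen_integral_poly4 _ t heq3 ip0 ip1 ip2 ip3 ip4
    simp only [penE, discE]
    rw [e1, e2, e3]
    simp only [GLJ]
    ring
  have hfun : (fun t : ℝ => penE Ω ε k δ (fun x => u x + t * v x) w)
      = fun t : ℝ => penE Ω ε k δ u w + t * ((∫ x in Ω, (inner ℝ (gradient u x) (gradient v x) : ℝ)) + (1 + δ) / ε ^ 2 * (∫ x in Ω, dwf (u x) * v x) + 1 / k * (∫ x in Ω, (u x - w x) * v x)) + t ^ 2 * ((∫ x in Ω, 1 / 2 * ‖gradient v x‖ ^ 2) + (1 + δ) / ε ^ 2 * (∫ x in Ω, 1 / 2 * ((3 * u x ^ 2 - 1) * v x ^ 2)) + 1 / (2 * k) * (∫ x in Ω, v x ^ 2)) + t ^ 3 * ((1 + δ) / ε ^ 2 * (∫ x in Ω, u x * v x ^ 3)) + t ^ 4 * ((1 + δ) / ε ^ 2 * (∫ x in Ω, 1 / 4 * v x ^ 4)) :=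
    funext key
  rw [hfun]
  have h1 : HasDerivAt (fun t : ℝ => t * ((∫ x in Ω, (inner ℝ (gradient u x) (gradient v x) : ℝ)) + (1 + δ) / ε ^ 2 * (∫ x in Ω, dwf (u x) * v x) + 1 / k * (∫ x in Ω, (u x - w x) * v x))) ((∫ x in Ω, (inner ℝ (gradient u x) (gradient v x) : ℝ)) + (1 + δ) / ε ^ 2 * (∫ x in Ω, dwf (u x) * v x) + 1 / k * (∫ x in Ω, (u x - w x) * v x)) 0 := by
    simpa using (hasDerivAt_id (0 : ℝ)).mul_const ((∫ x in Ω, (inner ℝ (gradient u x) (gradient v x) : ℝ)) + (1 + δ) / ε ^ 2 * (∫ x in Ω, dwf (u x) * v x) + 1 / k * (∫ x in Ω, (u x - w x) * v x))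
  have h2 : HasDerivAt (fun t : ℝ => t ^ 2 * ((∫ x in Ω, 1 / 2 * ‖gradient v x‖ ^ 2) + (1 + δ) / ε ^ 2 * (∫ x in Ω, 1 / 2 * ((3 * u x ^ 2 - 1) * v x ^ 2)) + 1 / (2 * k) * (∫ x in Ω, v x ^ 2))) 0 0 := by
    simpa using (hasDerivAt_pow 2 (0 : ℝ)).mul_const ((∫ x in Ω, 1 / 2 * ‖gradient v x‖ ^ 2) + (1 + δ) / ε ^ 2 * (∫ x in Ω, 1 / 2 * ((3 * u x ^ 2 - 1) * v x ^ 2)) + 1 / (2 * k) * (∫ x in Ω, v x ^ 2))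
  have h3 : HasDerivAt (fun t : ℝ => t ^ 3 * ((1 + δ) / ε ^ 2 * (∫ x in Ω, u x * v x ^ 3))) 0 0 := by
    simpa using (hasDerivAt_pow 3 (0 : ℝ)).mul_const ((1 + δ) / ε ^ 2 * (∫ x in Ω, u x * v x ^ 3))
  have h4 : HasDerivAt (fun t : ℝ => t ^ 4 * ((1 + δ) / ε ^ 2 * (∫ x in Ω, 1 / 4 * v x ^ 4))) 0 0 := by
    simpa using (hasDerivAt_pow 4 (0 : ℝ)).mul_const ((1 + δ) / ε ^ 2 * (∫ x in Ω, 1 / 4 * v x ^ 4))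
  have H := ((((hasDerivAt_const (0 : ℝ) (penE Ω ε k δ u w)).add h1).add h2).add h3).add h4
  refine H.congr_deriv ?_
  have hs : Real.sqrt (1 + δ) ^ 2 = 1 + δ := Real.sq_sqrt (by linarith)
  rw [div_pow, hs, one_div_div]
  ring
end

section
/- Let ε, k > 0 satisfy k ≤ ε². Under the admissibility assumptions on u, v, w, the map t ↦ E(u + t·v; w) is convex on ℝ. -/
open MeasureTheory

/-- Affine functions on ℝ are convex. -/
lemma aux_convexOn_affine (c e : ℝ) : ConvexOn ℝ Set.univ (fun t : ℝ => c * t + e) := by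
  refine ⟨convex_univ, fun p _ q _ a b ha hb hab => ?_⟩
  simp only [smul_eq_mul]
  exact le_of_eq (by linear_combination (-e) * hab)

/-- `t ↦ ‖a + t • b‖²` is convex. -/
lemma aux_convexOn_normsq {F : Type*} [NormedAddCommGroup F] [InnerProductSpace ℝ F]
    (a b : F) : ConvexOn ℝ Set.univ (fun t : ℝ => ‖a + t • b‖ ^ 2) := by
  have h : (fun t : ℝ => ‖a + t • b‖ ^ 2)
      = fun t : ℝ => ‖b‖ ^ 2 * t ^ 2 + ((2 * inner ℝ a b) * t + ‖a‖ ^ 2) := by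
    funext t
    rw [norm_add_sq_real, real_inner_smul_right, norm_smul]
    simp only [Real.norm_eq_abs, mul_pow, sq_abs]
    ring
  rw [h]
  exact (even_two.convexOn_pow.smul (by positivity)).add (aux_convexOn_affine _ _)

/-- The penalized double-well is convex when `k ≤ ε²`. -/
lemma aux_convexOn_dw (ε k W : ℝ) (hε : 0 < ε) (hk : 0 < k) (hcond : k ≤ ε ^ 2) :
    ConvexOn ℝ Set.univ
      (fun s : ℝ => (1 / ε ^ 2) * dwF s + (1 / (2 * k)) * (s - W) ^ 2) := by
  have hB : 0 ≤ 1 / (2 * k) - 1 / (2 * ε ^ 2) := by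
    rw [sub_nonneg]
    apply one_div_le_one_div_of_le (by positivity)
    nlinarith
  have h : (fun s : ℝ => (1 / ε ^ 2) * dwF s + (1 / (2 * k)) * (s - W) ^ 2)
      = fun s : ℝ => (1 / (4 * ε ^ 2)) * s ^ 4
          + ((1 / (2 * k) - 1 / (2 * ε ^ 2)) * s ^ 2
          + ((-W / k) * s + (1 / (4 * ε ^ 2) + W ^ 2 / (2 * k)))) := by
    funext s
    unfold dwF
    field_simp
    ring
  rw [h]
  exact ((by decide : Even 4).convexOn_pow.smul (by positivity)).add
    ((even_two.convexOn_pow.smul hB).add (aux_convexOn_affine _ _))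

/-- Integral of a pointwise-convex family is convex. -/
lemma aux_convexOn_integral {α : Type*} [MeasurableSpace α] (μ : Measure α) (s : Set α)
    (hs : MeasurableSet s) (Φ : ℝ → α → ℝ)
    (hconv : ∀ x, ConvexOn ℝ Set.univ fun t => Φ t x)
    (hint : ∀ t, IntegrableOn (Φ t) s μ) :
    ConvexOn ℝ Set.univ (fun t => ∫ x in s, Φ t x ∂μ) := by
  refine ⟨convex_univ, fun p _ q _ a b ha hb hab => ?_⟩
  have h1 : IntegrableOn (fun x => a • Φ p x) s μ := (hint p).smul a
  have h2 : IntegrableOn (fun x => b • Φ q x) s μ := (hint q).smul b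
  calc (∫ x in s, Φ (a • p + b • q) x ∂μ)
      ≤ ∫ x in s, (a • Φ p x + b • Φ q x) ∂μ := by
        refine setIntegral_mono_on (hint _) (h1.add h2) hs ?_
        intro x hx
        exact (hconv x).2 (Set.mem_univ p) (Set.mem_univ q) ha hb hab
    _ = a • (∫ x in s, Φ p x ∂μ) + b • ∫ x in s, Φ q x ∂μ := by
        rw [integral_add h1 h2, integral_smul, integral_smul]

theorem convexity_of_discrete_energy_along_line
    (d : ℕ) (hd : 1 ≤ d)
    (Ω : Set (EuclideanSpace ℝ (Fin d))) (hΩ : MeasurableSet Ω)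
    (hΩfin : volume Ω < ⊤)
    (ε k : ℝ) (hε : 0 < ε) (hk : 0 < k) (hcond : k ≤ ε ^ 2)
    (u v w : EuclideanSpace ℝ (Fin d) → ℝ)
    (hu : Differentiable ℝ u) (hv : Differentiable ℝ v)
    (hum : Measurable u) (hvm : Measurable v) (hwm : Measurable w)
    (hgum : Measurable fun x => gradient u x)
    (hgvm : Measurable fun x => gradient v x)
    (hub : ∃ C, ∀ x ∈ Ω, |u x| ≤ C) (hvb : ∃ C, ∀ x ∈ Ω, |v x| ≤ C)
    (hwb : ∃ C, ∀ x ∈ Ω, |w x| ≤ C)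
    (hgub : ∃ C, ∀ x ∈ Ω, ‖gradient u x‖ ≤ C)
    (hgvb : ∃ C, ∀ x ∈ Ω, ‖gradient v x‖ ≤ C) :
    ConvexOn ℝ Set.univ
      (fun t : ℝ => discE Ω ε k (fun x => u x + t * v x) w) := by
  obtain ⟨Cu, hCu⟩ := hub
  obtain ⟨Cv, hCv⟩ := hvb
  obtain ⟨Cw, hCw⟩ := hwb
  obtain ⟨Cgu, hCgu⟩ := hgub
  obtain ⟨Cgv, hCgv⟩ := hgvb
  -- gradient of the affine combination
  have hgrad : ∀ (t : ℝ) (x : EuclideanSpace ℝ (Fin d)),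
      gradient (fun y => u y + t * v y) x = gradient u x + t • gradient v x := by
    intro t x
    have h3 : HasFDerivAt (fun y => u y + t * v y)
        (fderiv ℝ u x + t • fderiv ℝ v x) x :=
      (hu x).hasFDerivAt.add ((hv x).hasFDerivAt.const_mul t)
    rw [h3.hasGradientAt.gradient]
    simp only [gradient, map_add, _root_.map_smul]
  -- the pointwise integrand
  set Φ : ℝ → EuclideanSpace ℝ (Fin d) → ℝ := fun t x =>
    (1 / 2) * ‖gradient u x + t • gradient v x‖ ^ 2
      + (1 / ε ^ 2) * dwF (u x + t * v x)
      + (1 / (2 * k)) * (u x + t * v x - w x) ^ 2 with hΦ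
  -- pointwise convexity in t
  have hconv : ∀ x, ConvexOn ℝ Set.univ (fun t => Φ t x) := by
    intro x
    have h1 : ConvexOn ℝ Set.univ
        (fun t : ℝ => (1 / 2) * ‖gradient u x + t • gradient v x‖ ^ 2) :=
      (aux_convexOn_normsq (gradient u x) (gradient v x)).smul (by norm_num)
    have h2 : ConvexOn ℝ Set.univ (fun t : ℝ =>
        (1 / ε ^ 2) * dwF (u x + t * v x)
          + (1 / (2 * k)) * (u x + t * v x - w x) ^ 2) := by
      have hc := (aux_convexOn_dw ε k (w x) hε hk hcond).comp_affineMap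
        (AffineMap.lineMap (u x) (u x + v x))
      rw [Set.preimage_univ] at hc
      convert hc using 1
      repeat rfl
      funext t
      simp [Function.comp, AffineMap.lineMap_apply, smul_eq_mul]
      ring_nf
    have h12 := h1.add h2
    convert h12 using 1
    repeat rfl
    funext t
    simp only [hΦ, Pi.add_apply]
    ring
  -- measurability
  have hΦm : ∀ t, Measurable (Φ t) := by
    intro t
    apply Measurable.add
    apply Measurable.add
    · exact ((hgum.add (hgvm.const_smul t)).norm.pow_const 2).const_mul _
    · unfold dwF
      exact (((((hum.add (hvm.const_mul t)).pow_const 2).sub measurable_const).pow_const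
        2).const_mul _).const_mul _
    · exact (((hum.add (hvm.const_mul t)).sub hwm).pow_const 2).const_mul _
  -- boundedness
  have hΦb : ∀ t, ∀ x ∈ Ω, |Φ t x| ≤
      (1 / 2) * (|Cgu| + |t| * |Cgv|) ^ 2
        + (1 / ε ^ 2) * ((1 / 4) * (((|Cu| + |t| * |Cv|) ^ 2 + 1) ^ 2))
        + (1 / (2 * k)) * ((|Cu| + |t| * |Cv|) + |Cw|) ^ 2 := by
    intro t x hx
    have hg : ‖gradient u x + t • gradient v x‖ ≤ |Cgu| + |t| * |Cgv| := by
      calc ‖gradient u x + t • gradient v x‖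
          ≤ ‖gradient u x‖ + ‖t • gradient v x‖ := norm_add_le _ _
        _ = ‖gradient u x‖ + |t| * ‖gradient v x‖ := by rw [norm_smul, Real.norm_eq_abs]
        _ ≤ |Cgu| + |t| * |Cgv| :=
            add_le_add ((hCgu x hx).trans (le_abs_self _))
              (mul_le_mul_of_nonneg_left ((hCgv x hx).trans (le_abs_self _)) (abs_nonneg t))
    have hs : |u x + t * v x| ≤ |Cu| + |t| * |Cv| := by
      calc |u x + t * v x| ≤ |u x| + |t| * |v x| := by rw [← abs_mul]; exact abs_add_le _ _
        _ ≤ |Cu| + |t| * |Cv| :=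
            add_le_add ((hCu x hx).trans (le_abs_self _))
              (mul_le_mul_of_nonneg_left ((hCv x hx).trans (le_abs_self _)) (abs_nonneg t))
    have hw : |u x + t * v x - w x| ≤ (|Cu| + |t| * |Cv|) + |Cw| :=
      (abs_sub _ _).trans (add_le_add hs ((hCw x hx).trans (le_abs_self _)))
    have h1 : (1 / 2) * ‖gradient u x + t • gradient v x‖ ^ 2
        ≤ (1 / 2) * (|Cgu| + |t| * |Cgv|) ^ 2 :=
      mul_le_mul_of_nonneg_left (pow_le_pow_left₀ (norm_nonneg _) hg 2) (by norm_num)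
    have h2 : (1 / ε ^ 2) * dwF (u x + t * v x)
        ≤ (1 / ε ^ 2) * ((1 / 4) * (((|Cu| + |t| * |Cv|) ^ 2 + 1) ^ 2)) := by
      have h2a : dwF (u x + t * v x) ≤ (1 / 4) * (((|Cu| + |t| * |Cv|) ^ 2 + 1) ^ 2) := by
        unfold dwF
        have h := abs_le.mp hs
        have hsq : (u x + t * v x) ^ 2 ≤ (|Cu| + |t| * |Cv|) ^ 2 := sq_le_sq' h.1 h.2
        nlinarith [hsq, sq_nonneg (u x + t * v x),
          mul_nonneg (sub_nonneg.2 hsq) (sq_nonneg (u x + t * v x)),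
          mul_nonneg (sub_nonneg.2 hsq) (sq_nonneg (|Cu| + |t| * |Cv|))]
      exact mul_le_mul_of_nonneg_left h2a (by positivity)
    have h3 : (1 / (2 * k)) * (u x + t * v x - w x) ^ 2
        ≤ (1 / (2 * k)) * ((|Cu| + |t| * |Cv|) + |Cw|) ^ 2 := by
      have h3a : (u x + t * v x - w x) ^ 2 ≤ ((|Cu| + |t| * |Cv|) + |Cw|) ^ 2 := by
        rw [← sq_abs (u x + t * v x - w x)]
        exact pow_le_pow_left₀ (abs_nonneg _) hw 2
      exact mul_le_mul_of_nonneg_left h3a (by positivity)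
    have hnn : (0:ℝ) ≤ Φ t x := by
      simp only [hΦ]
      have hd : (0:ℝ) ≤ dwF (u x + t * v x) := by unfold dwF; positivity
      positivity
    rw [abs_of_nonneg hnn]
    simp only [hΦ]
    linarith
  -- integrability
  have hint : ∀ t, IntegrableOn (Φ t) Ω := by
    intro t
    refine Measure.integrableOn_of_bounded hΩfin.ne (hΦm t).aestronglyMeasurable
      (M := (1 / 2) * (|Cgu| + |t| * |Cgv|) ^ 2
        + (1 / ε ^ 2) * ((1 / 4) * (((|Cu| + |t| * |Cv|) ^ 2 + 1) ^ 2))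
        + (1 / (2 * k)) * ((|Cu| + |t| * |Cv|) + |Cw|) ^ 2) ?_
    filter_upwards [ae_restrict_mem hΩ] with x hx
    rw [Real.norm_eq_abs]
    exact hΦb t x hx
  have hintC : ∀ t : ℝ, IntegrableOn
      (fun x => (1 / (2 * k)) * (u x + t * v x - w x) ^ 2) Ω := by
    intro t
    refine Measure.integrableOn_of_bounded hΩfin.ne
      ((((hum.add (hvm.const_mul t)).sub hwm).pow_const 2).const_mul
        (1 / (2 * k))).aestronglyMeasurable ?_
      (M := (1 / (2 * k)) * ((|Cu| + |t| * |Cv|) + |Cw|) ^ 2)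
    filter_upwards [ae_restrict_mem hΩ] with x hx
    rw [Real.norm_eq_abs]
    have hs : |u x + t * v x| ≤ |Cu| + |t| * |Cv| := by
      calc |u x + t * v x| ≤ |u x| + |t| * |v x| := by rw [← abs_mul]; exact abs_add_le _ _
        _ ≤ |Cu| + |t| * |Cv| :=
            add_le_add ((hCu x hx).trans (le_abs_self _))
              (mul_le_mul_of_nonneg_left ((hCv x hx).trans (le_abs_self _)) (abs_nonneg t))
    have hw : |u x + t * v x - w x| ≤ (|Cu| + |t| * |Cv|) + |Cw| :=
      (abs_sub _ _).trans (add_le_add hs ((hCw x hx).trans (le_abs_self _)))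
    have h3a : (u x + t * v x - w x) ^ 2 ≤ ((|Cu| + |t| * |Cv|) + |Cw|) ^ 2 := by
      rw [← sq_abs (u x + t * v x - w x)]
      exact pow_le_pow_left₀ (abs_nonneg _) hw 2
    rw [abs_of_nonneg (by positivity)]
    exact mul_le_mul_of_nonneg_left h3a (by positivity)
  have hintA : ∀ t : ℝ, IntegrableOn
      (fun x => (1 / 2) * ‖gradient u x + t • gradient v x‖ ^ 2
        + (1 / ε ^ 2) * dwF (u x + t * v x)) Ω := by
    intro t
    refine IntegrableOn.congr_fun ((hint t).sub (hintC t)) (fun x _ => ?_) hΩ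
    simp only [hΦ, Pi.sub_apply]
    ring
  -- rewrite discE as a single integral
  have hE : (fun t : ℝ => discE Ω ε k (fun x => u x + t * v x) w)
      = fun t : ℝ => ∫ x in Ω, Φ t x := by
    funext t
    unfold discE GLJ
    simp only [hgrad]
    rw [← integral_const_mul, ← integral_add (hintA t) (hintC t)]
  rw [hE]
  exact aux_convexOn_integral volume Ω hΩ Φ hconv hint
end

section
/- Let ε, k > 0 satisfy k ≤ ε². Under the admissibility assumptions on u, v, w, if u satisfies the fully implicit scheme tested against v, namely (1/k)∫_Ω (u−w)v dx + ∫_Ω ∇u·∇v dx + (1/ε²)∫_Ω f(u) v dx = 0, then u globally minimizes the discrete energy along the line through u in direction v: E(u; w) ≤ E(u + t·v; w) for all t ∈ ℝ. -/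
open MeasureTheory

section Aux

variable {d : ℕ} {Ω : Set (EuclideanSpace ℝ (Fin d))}

/-- Bounded measurable on `Ω`. -/
def BM (Ω : Set (EuclideanSpace ℝ (Fin d))) (f : EuclideanSpace ℝ (Fin d) → ℝ) : Prop :=
  Measurable f ∧ ∃ C, ∀ x ∈ Ω, |f x| ≤ C

lemma BM.const (c : ℝ) : BM Ω (fun _ => c) :=
  ⟨measurable_const, ⟨|c|, fun _ _ => le_refl _⟩⟩

lemma BM.add {f g} (hf : BM Ω f) (hg : BM Ω g) : BM Ω (fun x => f x + g x) := by
  obtain ⟨hfm, Cf, hCf⟩ := hf; obtain ⟨hgm, Cg, hCg⟩ := hg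
  exact ⟨hfm.add hgm, Cf + Cg, fun x hx =>
    (abs_add_le _ _).trans (add_le_add (hCf x hx) (hCg x hx))⟩

lemma BM.sub {f g} (hf : BM Ω f) (hg : BM Ω g) : BM Ω (fun x => f x - g x) := by
  obtain ⟨hfm, Cf, hCf⟩ := hf; obtain ⟨hgm, Cg, hCg⟩ := hg
  exact ⟨hfm.sub hgm, Cf + Cg, fun x hx =>
    (abs_sub _ _).trans (add_le_add (hCf x hx) (hCg x hx))⟩

lemma BM.mul {f g} (hf : BM Ω f) (hg : BM Ω g) : BM Ω (fun x => f x * g x) := by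
  obtain ⟨hfm, Cf, hCf⟩ := hf; obtain ⟨hgm, Cg, hCg⟩ := hg
  refine ⟨hfm.mul hgm, Cf * Cg, fun x hx => ?_⟩
  rw [abs_mul]
  have h1 := hCf x hx; have h2 := hCg x hx
  have h3 := abs_nonneg (f x); have h4 := abs_nonneg (g x)
  nlinarith

lemma BM.const_mul {f} (c : ℝ) (hf : BM Ω f) : BM Ω (fun x => c * f x) :=
  (BM.const c).mul hf

lemma BM.pow {f} (hf : BM Ω f) (n : ℕ) : BM Ω (fun x => f x ^ n) := by
  induction n with
  | zero => simpa using BM.const (Ω := Ω) 1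
  | succ n ih => simpa [pow_succ] using ih.mul hf

lemma BM.of_le {g} (hg : BM Ω g) {f} (hfm : Measurable f)
    (h : ∀ x ∈ Ω, |f x| ≤ g x) : BM Ω f := by
  obtain ⟨_, C, hC⟩ := hg
  exact ⟨hfm, C, fun x hx => (h x hx).trans ((le_abs_self _).trans (hC x hx))⟩

lemma BM.integrableOn (hΩ : MeasurableSet Ω) (hfin : volume Ω < ⊤) {f}
    (hf : BM Ω f) : IntegrableOn f Ω := by
  obtain ⟨hm, C, hC⟩ := hf
  refine Measure.integrableOn_of_bounded (M := C) hfin.ne hm.aestronglyMeasurable ?_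
  filter_upwards [ae_restrict_mem hΩ] with x hx
  simpa [Real.norm_eq_abs] using hC x hx

end Aux

theorem global_min_along_line_of_FIS
    (d : ℕ) (hd : 1 ≤ d)
    (Ω : Set (EuclideanSpace ℝ (Fin d))) (hΩ : MeasurableSet Ω)
    (hΩfin : volume Ω < ⊤)
    (ε k : ℝ) (hε : 0 < ε) (hk : 0 < k) (hcond : k ≤ ε ^ 2)
    (u v w : EuclideanSpace ℝ (Fin d) → ℝ)
    (hu : Differentiable ℝ u) (hv : Differentiable ℝ v)
    (hum : Measurable u) (hvm : Measurable v) (hwm : Measurable w)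
    (hgum : Measurable fun x => gradient u x)
    (hgvm : Measurable fun x => gradient v x)
    (hub : ∃ C, ∀ x ∈ Ω, |u x| ≤ C) (hvb : ∃ C, ∀ x ∈ Ω, |v x| ≤ C)
    (hwb : ∃ C, ∀ x ∈ Ω, |w x| ≤ C)
    (hgub : ∃ C, ∀ x ∈ Ω, ‖gradient u x‖ ≤ C)
    (hgvb : ∃ C, ∀ x ∈ Ω, ‖gradient v x‖ ≤ C)
    (hFIS : (1 / k) * (∫ x in Ω, (u x - w x) * v x)
        + (∫ x in Ω, (inner ℝ (gradient u x) (gradient v x) : ℝ))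
        + (1 / ε ^ 2) * (∫ x in Ω, dwf (u x) * v x) = 0) :
    ∀ t : ℝ, discE Ω ε k u w ≤ discE Ω ε k (fun x => u x + t * v x) w := by
  intro t
  -- gradient of the perturbed function
  have hgz : ∀ x, gradient (fun y => u y + t * v y) x
      = gradient u x + t • gradient v x := by
    intro x
    have h1 := (hu x).hasGradientAt
    have h2 := (hv x).hasGradientAt
    have h3 : HasFDerivAt (fun y => u y + t * v y)
        ((InnerProductSpace.toDual ℝ _) (gradient u x + t • gradient v x)) x := by
      have := h1.hasFDerivAt.add (h2.hasFDerivAt.const_mul t)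
      rw [map_add, _root_.map_smul]
      exact this
    exact h3.hasGradientAt.gradient.trans ((InnerProductSpace.toDual ℝ _).symm_apply_apply _)
  -- bounded measurable facts
  have Bu : BM Ω u := ⟨hum, hub⟩
  have Bv : BM Ω v := ⟨hvm, hvb⟩
  have Bw : BM Ω w := ⟨hwm, hwb⟩
  have Bnu : BM Ω (fun x => ‖gradient u x‖) := by
    obtain ⟨C, hC⟩ := hgub
    exact ⟨hgum.norm, C, fun x hx => by
      simpa [abs_of_nonneg (norm_nonneg _)] using hC x hx⟩
  have Bnv : BM Ω (fun x => ‖gradient v x‖) := by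
    obtain ⟨C, hC⟩ := hgvb
    exact ⟨hgvm.norm, C, fun x hx => by
      simpa [abs_of_nonneg (norm_nonneg _)] using hC x hx⟩
  have Bip : BM Ω (fun x => (inner ℝ (gradient u x) (gradient v x) : ℝ)) :=
    (Bnu.mul Bnv).of_le (hgum.inner hgvm)
      (fun x _ => abs_real_inner_le_norm _ _)
  have Bnz : BM Ω (fun x => ‖gradient (fun y => u y + t * v y) x‖) := by
    have heq : (fun x => ‖gradient (fun y => u y + t * v y) x‖)
        = fun x => ‖gradient u x + t • gradient v x‖ := by
      funext x; rw [hgz]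
    rw [heq]
    refine (Bnu.add (BM.const_mul |t| Bnv)).of_le
      ((hgum.add (hgvm.const_smul t)).norm) ?_
    intro x _
    rw [abs_of_nonneg (norm_nonneg _)]
    refine (norm_add_le _ _).trans ?_
    rw [norm_smul, Real.norm_eq_abs]
  have Bz : BM Ω (fun x => u x + t * v x) := Bu.add (BM.const_mul t Bv)
  have BFu : BM Ω (fun x => dwF (u x)) := by
    simp only [dwF]
    exact BM.const_mul _ (((Bu.pow 2).sub (BM.const 1)).pow 2)
  have BFz : BM Ω (fun x => dwF (u x + t * v x)) := by
    simp only [dwF]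
    exact BM.const_mul _ (((Bz.pow 2).sub (BM.const 1)).pow 2)
  have Bfu : BM Ω (fun x => dwf (u x)) := by
    simp only [dwf]
    exact (Bu.pow 3).sub Bu
  -- integrability of all relevant pieces
  have int1u : IntegrableOn
      (fun x => (1 / 2) * ‖gradient u x‖ ^ 2 + (1 / ε ^ 2) * dwF (u x)) Ω :=
    ((BM.const_mul _ (Bnu.pow 2)).add (BM.const_mul _ BFu)).integrableOn hΩ hΩfin
  have int1z : IntegrableOn
      (fun x => (1 / 2) * ‖gradient (fun y => u y + t * v y) x‖ ^ 2
        + (1 / ε ^ 2) * dwF (u x + t * v x)) Ω :=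
    ((BM.const_mul _ (Bnz.pow 2)).add (BM.const_mul _ BFz)).integrableOn hΩ hΩfin
  have int2u : IntegrableOn (fun x => (1 / (2 * k)) * (u x - w x) ^ 2) Ω :=
    (BM.const_mul _ ((Bu.sub Bw).pow 2)).integrableOn hΩ hΩfin
  have int2z : IntegrableOn (fun x => (1 / (2 * k)) * (u x + t * v x - w x) ^ 2) Ω :=
    (BM.const_mul _ ((Bz.sub Bw).pow 2)).integrableOn hΩ hΩfin
  have iga : IntegrableOn (fun x => (1 / k) * ((u x - w x) * v x)) Ω :=
    (BM.const_mul _ ((Bu.sub Bw).mul Bv)).integrableOn hΩ hΩfin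
  have igb : IntegrableOn (fun x => (inner ℝ (gradient u x) (gradient v x) : ℝ)) Ω :=
    Bip.integrableOn hΩ hΩfin
  have igc : IntegrableOn (fun x => (1 / ε ^ 2) * (dwf (u x) * v x)) Ω :=
    (BM.const_mul _ (Bfu.mul Bv)).integrableOn hΩ hΩfin
  set Du : EuclideanSpace ℝ (Fin d) → ℝ := fun x =>
    ((1 / 2) * ‖gradient u x‖ ^ 2 + (1 / ε ^ 2) * dwF (u x))
      + (1 / (2 * k)) * (u x - w x) ^ 2 with hDu
  set Dz : EuclideanSpace ℝ (Fin d) → ℝ := fun x =>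
    ((1 / 2) * ‖gradient (fun y => u y + t * v y) x‖ ^ 2
      + (1 / ε ^ 2) * dwF (u x + t * v x))
      + (1 / (2 * k)) * (u x + t * v x - w x) ^ 2 with hDz
  set g : EuclideanSpace ℝ (Fin d) → ℝ := fun x =>
    (1 / k) * ((u x - w x) * v x) + (inner ℝ (gradient u x) (gradient v x) : ℝ)
      + (1 / ε ^ 2) * (dwf (u x) * v x) with hg
  have iDu : IntegrableOn Du Ω := int1u.add int2u
  have iDz : IntegrableOn Dz Ω := int1z.add int2z
  have ig : IntegrableOn g Ω := (iga.add igb).add igc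
  -- E(u) as a single integral
  have hEu : discE Ω ε k u w = ∫ x in Ω, Du x := by
    unfold discE GLJ
    rw [← integral_const_mul, ← integral_add int1u int2u]
  have hEz : discE Ω ε k (fun x => u x + t * v x) w = ∫ x in Ω, Dz x := by
    unfold discE GLJ
    rw [← integral_const_mul, ← integral_add int1z int2z]
  -- the tested scheme says ∫ g = 0
  have hg0 : ∫ x in Ω, g x = 0 := by
    rw [hg]
    have iab : IntegrableOn (fun x => (1 / k) * ((u x - w x) * v x)
        + (inner ℝ (gradient u x) (gradient v x) : ℝ)) Ω := iga.add igb
    rw [integral_add iab igc, integral_add iga igb, integral_const_mul,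
      integral_const_mul]
    exact hFIS
  -- pointwise inequality
  have hpt : ∀ x ∈ Ω, Du x + t * g x ≤ Dz x := by
    intro x _
    simp only [hDu, hDz, hg, dwF, dwf]
    rw [hgz x, norm_add_sq_real, real_inner_smul_right, norm_smul,
      Real.norm_eq_abs, mul_pow, sq_abs]
    have hE : (0:ℝ) < 1 / ε ^ 2 := by positivity
    have hK : (0:ℝ) < 1 / k := by positivity
    have hEK : 1 / ε ^ 2 ≤ 1 / k := one_div_le_one_div_of_le hk hcond
    have h2k : (1:ℝ) / (2 * k) = (1 / k) / 2 := by ring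
    rw [h2k]
    nlinarith [mul_nonneg hE.le (sq_nonneg (2 * u x * (t * v x) + (t * v x) ^ 2)),
      mul_nonneg hE.le (sq_nonneg (u x * (t * v x))),
      sq_nonneg (t * ‖gradient v x‖),
      mul_nonneg (sub_nonneg.2 hEK) (sq_nonneg (t * v x))]
  -- assemble
  have key : ∫ x in Ω, (Du x + t * g x) = ∫ x in Ω, Du x := by
    rw [integral_add iDu (ig.const_mul t), integral_const_mul, hg0,
      mul_zero, add_zero]
  calc discE Ω ε k u w = ∫ x in Ω, Du x := hEu
    _ = ∫ x in Ω, (Du x + t * g x) := key.symm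
    _ ≤ ∫ x in Ω, Dz x :=
        setIntegral_mono_on (iDu.add (ig.const_mul t)) iDz hΩ hpt
    _ = discE Ω ε k (fun x => u x + t * v x) w := hEz.symm
end

section
/- Let ε, k > 0 and δ ≥ 0, set ε' = ε/√(1+δ), and let u, w be admissible (u, w differentiable with u, w, ∇u, ∇w bounded and measurable on Ω). If Ẽ(u; w) ≤ Ẽ(w; w), in particular if u minimizes z ↦ Ẽ(z; w) over a class of functions containing w, then the Ginzburg–Landau energy with scaled interaction length ε' decays with the discrete dissipation bound: J_{ε'}(u) + (1/(2k))∫_Ω (u − w)² dx ≤ J_{ε'}(w). -/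
open MeasureTheory

/-- A measurable function bounded on a finite-measure measurable set is integrable there. -/
lemma integrableOn_of_bounded' {α : Type*} [MeasurableSpace α] {μ : Measure α} {s : Set α}
    (hsm : MeasurableSet s) (hs : μ s < ⊤)
    {f : α → ℝ} (hf : Measurable f) {C : ℝ} (hC : ∀ x ∈ s, |f x| ≤ C) :
    IntegrableOn f s μ := by
  refine Integrable.mono' (g := fun _ => C) (integrableOn_const hs.ne)
    hf.aestronglyMeasurable ?_
  filter_upwards [ae_restrict_mem₀ hsm.nullMeasurableSet] with x hx
  exact hC x hx

/-- Scaling identity: `J_{ε/√(1+δ)}(z) = J_ε(z) + (δ/ε²)∫_Ω F(z)`. -/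
lemma GLJ_scale {d : ℕ} {Ω : Set (EuclideanSpace ℝ (Fin d))} (hΩ : MeasurableSet Ω)
    (hΩfin : volume Ω < ⊤) {ε δ : ℝ} (hε : 0 < ε) (hδ : 0 ≤ δ)
    {z : EuclideanSpace ℝ (Fin d) → ℝ}
    (hzm : Measurable z) (hgzm : Measurable fun x => gradient z x)
    (hzb : ∃ C, ∀ x ∈ Ω, |z x| ≤ C) (hgzb : ∃ C, ∀ x ∈ Ω, ‖gradient z x‖ ≤ C) :
    GLJ Ω (ε / Real.sqrt (1 + δ)) z = GLJ Ω ε z + (δ / ε ^ 2) * ∫ x in Ω, dwF (z x) := by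
  obtain ⟨C, hC⟩ := hzb
  obtain ⟨D, hD⟩ := hgzb
  have hdwFm : Measurable fun x => dwF (z x) := by
    unfold dwF; exact (measurable_const.mul (((hzm.pow_const 2).sub measurable_const).pow_const 2))
  have hdwF_int : IntegrableOn (fun x => dwF (z x)) Ω volume := by
    refine integrableOn_of_bounded' hΩ hΩfin hdwFm (C := (1/4) * (C^2 + 1)^2) ?_
    intro x hx
    have h1 : |z x| ≤ C := hC x hx
    have h0 : (0:ℝ) ≤ C := le_trans (abs_nonneg _) h1
    have hz2 : z x ^ 2 ≤ C ^ 2 := by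
      have := sq_abs (z x); nlinarith [abs_nonneg (z x)]
    have hz2' : (0:ℝ) ≤ z x ^ 2 := sq_nonneg _
    unfold dwF
    rw [abs_mul, abs_of_nonneg (by norm_num : (0:ℝ) ≤ 1/4), abs_of_nonneg (sq_nonneg _)]
    nlinarith [sq_nonneg (z x ^ 2 - 1), sq_nonneg (z x)]
  have hgrad_int : IntegrableOn (fun x => (1/2) * ‖gradient z x‖ ^ 2 + (1/ε^2) * dwF (z x)) Ω volume := by
    have hg : IntegrableOn (fun x => (1/2) * ‖gradient z x‖ ^ 2) Ω volume := by
      refine integrableOn_of_bounded' hΩ hΩfin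
        (measurable_const.mul (hgzm.norm.pow_const 2)) (C := (1/2) * D^2) ?_
      intro x hx
      have h1 := hD x hx
      have h0 : (0:ℝ) ≤ ‖gradient z x‖ := norm_nonneg _
      rw [abs_mul, abs_of_nonneg (by norm_num : (0:ℝ) ≤ 1/2), abs_of_nonneg (by positivity)]
      nlinarith
    exact hg.add (hdwF_int.const_mul _)
  have hsq : Real.sqrt (1 + δ) ^ 2 = 1 + δ := Real.sq_sqrt (by linarith)
  have hs_pos : 0 < Real.sqrt (1 + δ) := Real.sqrt_pos.2 (by linarith)
  have hkey : (1 / (ε / Real.sqrt (1 + δ)) ^ 2) = 1 / ε ^ 2 + δ / ε ^ 2 := by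
    rw [div_pow, hsq]
    field_simp
  have : GLJ Ω (ε / Real.sqrt (1 + δ)) z
      = ∫ x in Ω, (((1/2) * ‖gradient z x‖ ^ 2 + (1/ε^2) * dwF (z x)) + (δ/ε^2) * dwF (z x)) := by
    unfold GLJ
    congr 1
    funext x
    rw [hkey]
    ring
  rw [this, integral_add hgrad_int (hdwF_int.const_mul _), integral_const_mul]
  rfl

theorem scaled_energy_decay_of_penalized_minimization
    (d : ℕ) (hd : 1 ≤ d)
    (Ω : Set (EuclideanSpace ℝ (Fin d))) (hΩ : MeasurableSet Ω)
    (hΩfin : volume Ω < ⊤)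
    (ε k δ : ℝ) (hε : 0 < ε) (hk : 0 < k) (hδ : 0 ≤ δ)
    (u w : EuclideanSpace ℝ (Fin d) → ℝ)
    (hu : Differentiable ℝ u) (hw : Differentiable ℝ w)
    (hum : Measurable u) (hwm : Measurable w)
    (hgum : Measurable fun x => gradient u x)
    (hgwm : Measurable fun x => gradient w x)
    (hub : ∃ C, ∀ x ∈ Ω, |u x| ≤ C) (hwb : ∃ C, ∀ x ∈ Ω, |w x| ≤ C)
    (hgub : ∃ C, ∀ x ∈ Ω, ‖gradient u x‖ ≤ C)
    (hgwb : ∃ C, ∀ x ∈ Ω, ‖gradient w x‖ ≤ C)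
    (hmin : penE Ω ε k δ u w ≤ penE Ω ε k δ w w) :
    GLJ Ω (ε / Real.sqrt (1 + δ)) u + (1 / (2 * k)) * (∫ x in Ω, (u x - w x) ^ 2)
      ≤ GLJ Ω (ε / Real.sqrt (1 + δ)) w := by
  have hU := GLJ_scale hΩ hΩfin hε hδ hum hgum hub hgub
  have hW := GLJ_scale hΩ hΩfin hε hδ hwm hgwm hwb hgwb
  unfold penE discE at hmin
  have hww : (∫ x in Ω, (w x - w x) ^ 2) = 0 := by simp
  rw [hww] at hmin
  rw [hU, hW]
  linarith [hmin]
end
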